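/- arXiv:2109.06721 — 10 statements merged into one kernel-verified Lean document; each statement's English description precedes it below -/
import Mathlib

section
/- Let F be a field, n a positive integer whose image in F is nonzero, ω ∈ F a primitive n-th root of unity, and e_0,…,e_{n−1} the rows of the Fourier matrix F_n, with indices read modulo n. Fix 1 ≤ r ≤ n, an integer a, and an integer k with gcd(k, n) = 1, and let A be the r×n matrix whose rows are e_a, e_{a+k}, e_{a+2k}, …, e_{a+(r−1)k} (an arithmetic sequence of rows with difference k). Then for every nonzero v ∈ F^r the codeword vA has Hamming weight at least n − r + 1; in particular the rows of A are linearly independent and the code generated by A is an MDS [n, r, n−r+1] code. -/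
/-- Take `r` rows of the Fourier matrix in arithmetic progression `e_a, e_{a+k}, …,
e_{a+(r-1)k}` (indices mod `n`) with `gcd(k,n) = 1`. Every nonzero combination of these
rows has Hamming weight at least `n - r + 1`; in particular the rows are linearly
independent and generate an MDS `[n, r, n-r+1]` code. -/
theorem stmt5 (F : Type*) [Field F] [DecidableEq F] (n r : ℕ) (hn : 0 < n)
    (hchar : (n : F) ≠ 0) (ω : F) (hω : IsPrimitiveRoot ω n)
    (hr : 1 ≤ r) (hrn : r ≤ n) (a k : ℤ) (hk : Int.gcd k n = 1)
    (A : Matrix (Fin r) (Fin n) F)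
    (hA : ∀ (s : Fin r) (j : Fin n),
      A s j = ω ^ ((a + (s.val : ℤ) * k) * (j.val : ℤ))) :
    (∀ v : Fin r → F, v ≠ 0 → n - r + 1 ≤ hammingNorm (Matrix.vecMul v A)) ∧
      LinearIndependent F (fun s : Fin r => A s) := by
  have hω0 : ω ≠ 0 := hω.ne_zero hn.ne'
  set x : Fin n → F := fun j => ω ^ (k * (j.val : ℤ)) with hxdef
  have hxinj : Function.Injective x := by
    intro j1 j2 h
    have h' : ω ^ (k * (j1.val : ℤ)) = ω ^ (k * (j2.val : ℤ)) := h
    have h1 : ω ^ (k * (j1.val : ℤ) - k * (j2.val : ℤ)) = 1 := by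
      rw [zpow_sub₀ hω0, h', div_self (zpow_ne_zero _ hω0)]
    have h2 : (n : ℤ) ∣ k * ((j1.val : ℤ) - (j2.val : ℤ)) := by
      rw [mul_sub]
      exact (hω.zpow_eq_one_iff_dvd _).mp h1
    have hco : IsCoprime (n : ℤ) k := by
      rw [Int.isCoprime_iff_gcd_eq_one, Int.gcd_comm]
      exact hk
    have h3 : (n : ℤ) ∣ ((j1.val : ℤ) - (j2.val : ℤ)) := hco.dvd_of_dvd_mul_left h2
    have h4 : ((j1.val : ℤ) - (j2.val : ℤ)) = 0 := by
      refine Int.eq_zero_of_abs_lt_dvd h3 ?_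
      have := j1.isLt
      have := j2.isLt
      rw [abs_sub_lt_iff]
      constructor <;> [skip; skip] <;> push_cast <;> omega
    have : j1.val = j2.val := by omega
    exact Fin.ext this
  have key : ∀ v : Fin r → F, v ≠ 0 → n - r + 1 ≤ hammingNorm (Matrix.vecMul v A) := by
    intro v hv
    set P : Polynomial F := ∑ s : Fin r, Polynomial.C (v s) * Polynomial.X ^ (s.val) with hPdef
    have hcoeff : ∀ s : Fin r, P.coeff s.val = v s := by
      intro s
      rw [hPdef, Polynomial.finset_sum_coeff]
      rw [Finset.sum_eq_single s]
      · simp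
      · intro t _ hts
        have hne : t.val ≠ s.val := fun h => hts (Fin.ext h)
        simp [Polynomial.coeff_X_pow, hne.symm]
      · simp
    have hP0 : P ≠ 0 := by
      obtain ⟨s, hs⟩ := Function.ne_iff.mp hv
      simp only [Pi.zero_apply] at hs
      intro h
      exact hs (by rw [← hcoeff s, h, Polynomial.coeff_zero])
    have hPdeg : P.natDegree ≤ r - 1 := by
      apply Polynomial.natDegree_sum_le_of_forall_le
      intro s _
      refine (Polynomial.natDegree_C_mul_le _ _).trans ?_
      rw [Polynomial.natDegree_X_pow]
      omega
    have heval : ∀ j : Fin n, Matrix.vecMul v A j = ω ^ (a * (j.val : ℤ)) * P.eval (x j) := by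
      intro j
      rw [hPdef]
      simp only [Polynomial.eval_finset_sum, Polynomial.eval_mul, Polynomial.eval_C,
        Polynomial.eval_pow, Polynomial.eval_X, Matrix.vecMul, dotProduct,
        Finset.mul_sum]
      refine Finset.sum_congr rfl fun s _ => ?_
      rw [hA s j, hxdef]
      have : (a + (s.val : ℤ) * k) * (j.val : ℤ)
          = a * (j.val : ℤ) + (k * (j.val : ℤ)) * (s.val : ℤ) := by ring
      rw [this, zpow_add₀ hω0, ← zpow_natCast (ω ^ (k * (j.val : ℤ))) s.val, ← zpow_mul]
      ring
    have hzcard : (Finset.univ.filter fun j : Fin n => Matrix.vecMul v A j = 0).card ≤ r - 1 := by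
      have hsub : ∀ j ∈ Finset.univ.filter fun j : Fin n => Matrix.vecMul v A j = 0,
          x j ∈ P.roots.toFinset := by
        intro j hj
        rw [Finset.mem_filter] at hj
        rw [Multiset.mem_toFinset, Polynomial.mem_roots hP0]
        have := hj.2
        rw [heval j] at this
        exact Polynomial.IsRoot.def.mpr
          ((mul_eq_zero.mp this).resolve_left (zpow_ne_zero _ hω0))
      calc (Finset.univ.filter fun j : Fin n => Matrix.vecMul v A j = 0).card
          ≤ P.roots.toFinset.card :=
            Finset.card_le_card_of_injOn x hsub (hxinj.injOn)
        _ ≤ Multiset.card P.roots := P.roots.toFinset_card_le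
        _ ≤ P.natDegree := P.card_roots'
        _ ≤ r - 1 := hPdeg
    have hsplit : (Finset.univ.filter fun j : Fin n => Matrix.vecMul v A j = 0).card
        + (Finset.univ.filter fun j : Fin n => ¬ Matrix.vecMul v A j = 0).card = n := by
      rw [Finset.card_filter_add_card_filter_not]
      simp
    have hnorm : hammingNorm (Matrix.vecMul v A)
        = (Finset.univ.filter fun j : Fin n => ¬ Matrix.vecMul v A j = 0).card := rfl
    omega
  refine ⟨key, ?_⟩
  rw [Fintype.linearIndependent_iff]
  intro g hg
  by_contra hne
  push_neg at hne
  obtain ⟨i, hi⟩ := hne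
  have hg0 : g ≠ 0 := fun h => hi (by rw [h]; rfl)
  have hvm : Matrix.vecMul g A = 0 := by
    funext j
    have h1 : Matrix.vecMul g A j = (∑ i, g i • A i) j := by
      simp [Matrix.vecMul, dotProduct, Finset.sum_apply]
    rw [h1, hg]
  have := key g hg0
  rw [hvm] at this
  have h0 : hammingNorm (0 : Fin n → F) = 0 := by simp [hammingNorm]
  rw [h0] at this
  omega
end

section
/- Let F be a field, n a positive integer whose image in F is nonzero, ω ∈ F a primitive n-th root of unity, and e_0,…,e_{n−1} the rows of the Fourier matrix F_n. Let r > ⌊n/2⌋ and let C be the code spanned by the rows e_0, e_1, …, e_{r−1}. Then C contains its Euclidean dual: every x ∈ F^n satisfying Σ_{k=0}^{n−1} x_k c_k = 0 for all c ∈ C lies in C. Hence C is a dual-containing MDS [n, r, n−r+1] code. -/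
/-- For `r > ⌊n/2⌋`, the code spanned by the first `r` rows of the Fourier matrix
contains its Euclidean dual: any `x` orthogonal to every codeword lies in the code. -/
theorem stmt6 (F : Type*) [Field F] (n r : ℕ) (hn : 0 < n) (hchar : (n : F) ≠ 0)
    (ω : F) (hω : IsPrimitiveRoot ω n) (hr : n / 2 < r) (hrn : r ≤ n)
    (C : Submodule F (Fin n → F))
    (hC : C = Submodule.span F
      (Set.range fun i : Fin r => fun j : Fin n => ω ^ (i.val * j.val))) :
    ∀ x : Fin n → F, (∀ c ∈ C, ∑ k : Fin n, x k * c k = 0) → x ∈ C := by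
  intro x hx
  have hω0 : ω ≠ 0 := hω.ne_zero hn.ne'
  have hω1 : ω ^ n = 1 := hω.pow_eq_one
  -- key orthogonality
  have key : ∀ d : ℤ, ∑ j : Fin n, ω ^ ((j : ℤ) * d) = if (n:ℤ) ∣ d then (n : F) else 0 := by
    intro d
    have hzpow : ∀ j : Fin n, ω ^ ((j:ℤ) * d) = (ω ^ d) ^ (j : ℕ) := fun j => by
      rw [mul_comm, zpow_mul, zpow_natCast]
    by_cases hd : (n:ℤ) ∣ d
    · have h1 : ω ^ d = 1 := (hω.zpow_eq_one_iff_dvd d).mpr hd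
      simp [hzpow, h1, hd]
    · have h1 : ω ^ d ≠ 1 := fun h => hd ((hω.zpow_eq_one_iff_dvd d).mp h)
      have h2 : (ω ^ d) ^ n = 1 := by
        rw [← zpow_natCast, ← zpow_mul, mul_comm, zpow_mul, zpow_natCast, hω1, one_zpow]
      rw [if_neg hd]
      calc ∑ j : Fin n, ω ^ ((j:ℤ)*d) = ∑ j ∈ Finset.range n, (ω^d)^j := by
            simp only [hzpow]; exact Fin.sum_univ_eq_sum_range _ n
        _ = ((ω^d)^n - 1)/(ω^d - 1) := geom_sum_eq h1 n
        _ = 0 := by rw [h2]; simp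
  -- generators in C
  have hgen : ∀ j : Fin n, (j : ℕ) < r → (fun k : Fin n => ω ^ ((j:ℤ) * (k:ℤ))) ∈ C := by
    intro j hj
    have : (fun k : Fin n => ω ^ ((j:ℤ) * (k:ℤ))) =
        (fun k : Fin n => ω ^ ((⟨j, hj⟩ : Fin r).val * k.val)) := by
      funext k
      rw [← zpow_natCast]
      push_cast
      ring_nf
    rw [this, hC]
    exact Submodule.subset_span ⟨⟨j, hj⟩, rfl⟩
  -- hypothesis on Fourier coefficients
  have hxe : ∀ j : Fin n, (j : ℕ) < r → ∑ k : Fin n, x k * ω ^ ((j:ℤ) * (k:ℤ)) = 0 := by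
    intro j hj
    exact hx _ (hgen j hj)
  -- Fourier coefficients of x
  set b : Fin n → F := fun j => (n : F)⁻¹ * ∑ k : Fin n, x k * ω ^ (-(j:ℤ) * (k:ℤ)) with hb
  -- reconstruction
  have hrec : x = ∑ j : Fin n, b j • (fun k : Fin n => ω ^ ((j:ℤ) * (k:ℤ))) := by
    funext m
    have : (∑ j : Fin n, b j • (fun k : Fin n => ω ^ ((j:ℤ) * (k:ℤ)))) m
        = ∑ j : Fin n, b j * ω ^ ((j:ℤ) * (m:ℤ)) := by
      simp [Finset.sum_apply]
    rw [this]
    simp only [hb]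
    refine Eq.symm ?_
    calc ∑ j : Fin n, ((n : F)⁻¹ * ∑ k : Fin n, x k * ω ^ (-(j:ℤ) * (k:ℤ))) * ω ^ ((j:ℤ) * (m:ℤ))
        = (n:F)⁻¹ * ∑ j : Fin n, ∑ k : Fin n, x k * ω ^ ((j:ℤ) * ((m:ℤ) - (k:ℤ))) := by
          rw [Finset.mul_sum]
          refine Finset.sum_congr rfl fun j _ => ?_
          rw [mul_assoc, Finset.sum_mul]
          congr 1
          refine Finset.sum_congr rfl fun k _ => ?_
          rw [mul_assoc, ← zpow_add₀ hω0]
          ring_nf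
      _ = (n:F)⁻¹ * ∑ k : Fin n, x k * ∑ j : Fin n, ω ^ ((j:ℤ) * ((m:ℤ) - (k:ℤ))) := by
          rw [Finset.sum_comm]
          congr 1
          exact Finset.sum_congr rfl fun k _ => by rw [Finset.mul_sum]
      _ = (n:F)⁻¹ * ∑ k : Fin n, x k * (if (n:ℤ) ∣ ((m:ℤ) - (k:ℤ)) then (n:F) else 0) := by
          congr 1
          exact Finset.sum_congr rfl fun k _ => by rw [key]
      _ = x m := by
          rw [Finset.sum_eq_single m]
          · rw [if_pos (by simp)]
            field_simp
          · intro k _ hk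
            rw [if_neg, mul_zero]
            intro hdvd
            have hm := m.isLt
            have hk' := k.isLt
            have h1 : (m:ℤ) - (k:ℤ) = 0 :=
              Int.eq_zero_of_dvd_of_natAbs_lt_natAbs hdvd (by omega)
            exact hk (Fin.ext (by omega))
          · simp
  -- each summand lies in C
  rw [hrec]
  refine Submodule.sum_mem C fun j _ => ?_
  by_cases hj : (j : ℕ) < r
  · exact Submodule.smul_mem C _ (hgen j hj)
  · -- then b j = 0
    have hj0 : 0 < (j:ℕ) := by omega
    have hbj : b j = 0 := by
      have heq : ∀ k : Fin n, ω ^ (-(j:ℤ) * (k:ℤ)) = ω ^ (((⟨n - j, by omega⟩ : Fin n) : ℤ) * (k:ℤ)) := by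
        intro k
        have : ((⟨n - j, by omega⟩ : Fin n) : ℤ) * (k:ℤ) = -(j:ℤ) * (k:ℤ) + (n:ℤ) * (k:ℤ) := by
          push_cast [Nat.cast_sub (by omega : (j:ℕ) ≤ n)]
          ring
        rw [this, zpow_add₀ hω0]
        have : ω ^ ((n:ℤ) * (k:ℤ)) = 1 := by
          rw [zpow_mul, zpow_natCast ω n, hω1, one_zpow]
        rw [this, mul_one]
      have h0 : ∑ k : Fin n, x k * ω ^ (-(j:ℤ) * (k:ℤ)) = 0 := by
        have := hxe ⟨n - j, by omega⟩ (by exact (by omega : n - (j:ℕ) < r))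
        rw [← this]
        exact Finset.sum_congr rfl fun k _ => by rw [heq k]
      rw [hb]
      dsimp only
      rw [h0, mul_zero]
    simp [hbj]
end

section
/- Let q be a prime power and F a field with q^2 elements, let n be a positive integer dividing q − 1, and let ω ∈ F be a primitive n-th root of unity. Let e_0,…,e_{n−1} be the rows of the Fourier matrix F_n built from ω, let r > ⌊n/2⌋, and let C be the code spanned by e_0, e_1, …, e_{r−1}. Then C contains its Hermitian dual: every x ∈ F^n satisfying Σ_{k=0}^{n−1} x_k c_k^q = 0 for all c ∈ C lies in C. (The key point is that since q ≡ 1 (mod n), raising each entry of e_i to the q-th power returns e_i.) -/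
/-- Over `F = GF(q²)` with `n ∣ q - 1` and `ω` a primitive `n`-th root of unity, the code
spanned by the first `r > ⌊n/2⌋` rows of the Fourier matrix contains its Hermitian dual:
any `x` with `∑_k x_k c_k^q = 0` for all codewords `c` lies in the code. -/
theorem stmt7 (q : ℕ) (hq : IsPrimePow q) (F : Type*) [Field F] [Fintype F]
    (hF : Fintype.card F = q ^ 2) (n : ℕ) (hn : 0 < n) (hdvd : n ∣ q - 1)
    (ω : F) (hω : IsPrimitiveRoot ω n) (r : ℕ) (hr : n / 2 < r) (hrn : r ≤ n)
    (C : Submodule F (Fin n → F))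
    (hC : C = Submodule.span F
      (Set.range fun i : Fin r => fun j : Fin n => ω ^ (i.val * j.val))) :
    ∀ x : Fin n → F, (∀ c ∈ C, ∑ k : Fin n, x k * c k ^ q = 0) → x ∈ C := by
  intro x hx
  have hq1 : 1 < q := hq.one_lt
  have hωq : ω ^ q = ω := by
    have h1 : ω ^ (q - 1) = 1 := (hω.pow_eq_one_iff_dvd _).mpr hdvd
    calc ω ^ q = ω ^ (q - 1 + 1) := by rw [Nat.sub_add_cancel hq1.le]
    _ = ω ^ (q - 1) * ω := by rw [pow_succ]
    _ = ω := by rw [h1, one_mul]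
  have hωa : ∀ a : ℕ, (ω ^ a) ^ q = ω ^ a := by
    intro a; rw [← pow_mul, mul_comm, pow_mul, hωq]
  have hωne : ω ≠ 0 := hω.ne_zero hn.ne'
  have hnF : (n : F) ≠ 0 := by
    intro h0
    have hcard : ((Fintype.card F : ℕ) : F) = 0 := Nat.cast_card_eq_zero F
    rw [hF] at hcard
    push_cast at hcard
    have hqF : (q : F) = 0 := by
      have h2 : ((q : F)) ^ 2 = 0 := hcard
      exact pow_eq_zero_iff (two_ne_zero) |>.mp h2
    obtain ⟨c, hc⟩ := hdvd
    have h2 : ((q - 1 : ℕ) : F) = 0 := by rw [hc]; push_cast; rw [h0]; ring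
    rw [Nat.cast_sub hq1.le, hqF] at h2
    simp at h2
  have h2r : n < 2 * r := by omega
  -- the generators lie in C
  have H : ∀ j : ℕ, j < r → ∑ k : Fin n, x k * ω ^ (j * k.val) = 0 := by
    intro j hj
    have hmem : (fun k : Fin n => ω ^ (j * k.val)) ∈ C := by
      rw [hC]
      exact Submodule.subset_span ⟨⟨j, hj⟩, rfl⟩
    have := hx _ hmem
    simpa only [hωa] using this
  -- pointwise power-reduction
  have pw : ∀ a : ℕ, ω ^ a = ω ^ (a % n) := by
    intro a
    conv_lhs => rw [← Nat.div_add_mod a n]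
    rw [pow_add, pow_mul, hω.pow_eq_one, one_pow, one_mul]
  -- term manipulation
  have term : ∀ i k m : Fin n,
      ω ^ ((n - i.val) * k.val) * ω ^ (i.val * m.val)
        = (ω ^ ((n - k.val) + m.val)) ^ i.val := by
    intro i k m
    have hi : i.val ≤ n := i.isLt.le
    have hk : k.val ≤ n := k.isLt.le
    apply mul_right_cancel₀ (pow_ne_zero (i.val * k.val) hωne)
    rw [← pow_mul, mul_assoc, ← pow_add, ← pow_add, ← pow_add]
    have e1 : (n - i.val) * k.val + (i.val * m.val + i.val * k.val)
        = n * k.val + i.val * m.val := by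
      have : (n - i.val) * k.val + i.val * k.val = n * k.val := by
        rw [← Nat.add_mul, Nat.sub_add_cancel hi]
      omega
    have e2 : (n - k.val + m.val) * i.val + i.val * k.val
        = n * i.val + m.val * i.val := by
      have : (n - k.val) * i.val + k.val * i.val = n * i.val := by
        rw [← Nat.add_mul, Nat.sub_add_cancel hk]
      rw [Nat.add_mul, mul_comm i.val k.val]
      omega
    have hnm : ∀ a : ℕ, ω ^ (n * a) = 1 := fun a => by
      rw [pow_mul, hω.pow_eq_one, one_pow]
    rw [e1, e2, pow_add, pow_add, hnm, hnm, one_mul, one_mul, mul_comm i.val m.val]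
  -- geometric sum
  have geo : ∀ k m : Fin n,
      (∑ i : Fin n, (ω ^ ((n - k.val) + m.val)) ^ i.val)
        = if m = k then (n : F) else 0 := by
    intro k m
    set z := ω ^ ((n - k.val) + m.val) with hz
    have hzn : z ^ n = 1 := by
      rw [hz, ← pow_mul, mul_comm, pow_mul, hω.pow_eq_one, one_pow]
    by_cases hmk : m = k
    · subst hmk
      have : z = 1 := by
        rw [hz, Nat.sub_add_cancel m.isLt.le, hω.pow_eq_one]
      simp [this]
    · have hz1 : z ≠ 1 := by
        intro h1
        have hdv : n ∣ (n - k.val + m.val) := (hω.pow_eq_one_iff_dvd _).mp h1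
        obtain ⟨c, hc⟩ := hdv
        have hk := k.isLt
        have hm := m.isLt
        have hc2 : c < 2 := by
          by_contra hcc
          push_neg at hcc
          have : 2 * n ≤ n * c := by
            calc 2 * n = n * 2 := by ring
            _ ≤ n * c := Nat.mul_le_mul_left n hcc
          omega
        interval_cases c <;> [skip; skip] <;> omega
      rw [Fin.sum_univ_eq_sum_range (fun i => z ^ i), geom_sum_eq hz1, hzn]
      simp [hmk]
  -- Fourier coefficients
  set y : Fin n → F := fun i => (n : F)⁻¹ * ∑ k : Fin n, x k * ω ^ ((n - i.val) * k.val)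
    with hy
  -- inversion formula
  have hinv : x = ∑ i : Fin n, y i • (fun j : Fin n => ω ^ (i.val * j.val)) := by
    funext m
    rw [Finset.sum_apply]
    simp only [Pi.smul_apply, smul_eq_mul, hy]
    symm
    calc ∑ i : Fin n, ((n : F)⁻¹ * ∑ k : Fin n, x k * ω ^ ((n - i.val) * k.val))
            * ω ^ (i.val * m.val)
        = ∑ i : Fin n, ∑ k : Fin n,
            (n : F)⁻¹ * x k * ((ω ^ ((n - k.val) + m.val)) ^ i.val) := by
          refine Finset.sum_congr rfl fun i _ => ?_
          rw [Finset.mul_sum, Finset.sum_mul]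
          refine Finset.sum_congr rfl fun k _ => ?_
          rw [← term i k m]; ring
      _ = ∑ k : Fin n, (n : F)⁻¹ * x k * ∑ i : Fin n, (ω ^ ((n - k.val) + m.val)) ^ i.val := by
          rw [Finset.sum_comm]
          exact Finset.sum_congr rfl fun k _ => (Finset.mul_sum _ _ _).symm
      _ = ∑ k : Fin n, (n : F)⁻¹ * x k * (if m = k then (n : F) else 0) := by
          refine Finset.sum_congr rfl fun k _ => by rw [geo k m]
      _ = x m := by
          rw [Finset.sum_eq_single m]
          · rw [if_pos rfl]
            field_simp
          · intro k _ hkm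
            simp [Ne.symm hkm]
          · intro hm; exact absurd (Finset.mem_univ m) hm
  rw [hinv]
  refine Submodule.sum_mem C fun i _ => ?_
  by_cases hir : i.val < r
  · refine Submodule.smul_mem C _ ?_
    rw [hC]
    exact Submodule.subset_span ⟨⟨i.val, hir⟩, rfl⟩
  · have hyi : y i = 0 := by
      have hlt : n - i.val < r := by omega
      rw [hy]
      simp only
      rw [H (n - i.val) hlt, mul_zero]
    rw [hyi, zero_smul]
    exact Submodule.zero_mem C
end

section
/- Let F be a field, n a positive integer whose image in F is nonzero, ω ∈ F a primitive n-th root of unity, and e_0,…,e_{n−1} the rows of the Fourier matrix F_n. Let r be a positive integer with 2r < n and let C be the code spanned by the 2r+1 rows e_0, e_1, e_{n−1}, e_2, e_{n−2}, …, e_r, e_{n−r}. Then C ∩ C^⊥ = 0 (C is a linear complementary dual code), and every nonzero codeword of C has Hamming weight at least n − 2r; in particular C is an LCD MDS [n, 2r+1, n−2r] code. -/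
def stmt8m (n s : ℕ) : ℕ :=
  if s = 0 then 0 else if s % 2 = 1 then (s + 1) / 2 else n - s / 2

def stmt8s (r s : ℕ) : ℕ := if s % 2 = 1 then r + (s + 1) / 2 else r - s / 2

def stmt8t (s : ℕ) : ℕ := if s = 0 then 0 else if s % 2 = 1 then s + 1 else s - 1

lemma stmt8m_lt {n r s : ℕ} (h2r : 2 * r < n) (hs : s ≤ 2 * r) : stmt8m n s < n := by
  unfold stmt8m; split_ifs <;> omega

lemma stmt8s_le {r s : ℕ} (hs : s ≤ 2 * r) : stmt8s r s ≤ 2 * r := by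
  unfold stmt8s; split_ifs <;> omega

lemma stmt8s_inj {r s t : ℕ} (hs : s ≤ 2 * r) (ht : t ≤ 2 * r)
    (h : stmt8s r s = stmt8s r t) : s = t := by
  unfold stmt8s at h; split_ifs at h <;> omega

lemma stmt8_m_add_r {n r s : ℕ} (h2r : 2 * r < n) (hs : s ≤ 2 * r) :
    stmt8m n s + r = stmt8s r s ∨ stmt8m n s + r = stmt8s r s + n := by
  unfold stmt8m stmt8s; split_ifs <;> omega

lemma stmt8t_le {r s : ℕ} (hr : 1 ≤ r) (hs : s ≤ 2 * r) : stmt8t s ≤ 2 * r := by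
  unfold stmt8t; split_ifs <;> omega

lemma stmt8t_zero : stmt8t 0 = 0 := rfl

lemma stmt8t_odd {s : ℕ} (h : s % 2 = 1) : stmt8t s = s + 1 := by
  unfold stmt8t; split_ifs <;> omega

lemma stmt8t_even {s : ℕ} (h0 : s ≠ 0) (h : s % 2 = 0) : stmt8t s = s - 1 := by
  unfold stmt8t; split_ifs <;> omega

lemma stmt8m_odd {n s : ℕ} (h : s % 2 = 1) : stmt8m n s = (s + 1) / 2 := by
  unfold stmt8m; split_ifs <;> omega

lemma stmt8m_even {n s : ℕ} (h0 : s ≠ 0) (h : s % 2 = 0) : stmt8m n s = n - s / 2 := by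
  unfold stmt8m; split_ifs <;> omega

lemma stmt8t_invol (s : ℕ) : stmt8t (stmt8t s) = s := by
  rcases Nat.eq_zero_or_pos s with rfl | hs
  · rfl
  rcases Nat.mod_two_eq_zero_or_one s with he | ho
  · rw [stmt8t_even (s := s) (by omega) (by omega),
      stmt8t_odd (s := s - 1) (by omega)]
    omega
  · rw [stmt8t_odd (s := s) (by omega),
      stmt8t_even (s := s + 1) (by omega) (by omega)]
    omega

lemma stmt8_dvd_small {n X : ℕ} (hn : 0 < n) (h : n ∣ X) (hX : X < 2 * n) :
    X = 0 ∨ X = n := by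
  obtain ⟨k, rfl⟩ := h
  have hk : k < 2 := by
    by_contra hk
    push_neg at hk
    have : n * 2 ≤ n * k := Nat.mul_le_mul_left n hk
    omega
  interval_cases k <;> omega

lemma stmt8_dvd_iff {n r s t : ℕ} (hn : 0 < n) (h2r : 2 * r < n)
    (hs : s ≤ 2 * r) (ht : t ≤ 2 * r) :
    n ∣ stmt8m n s + stmt8m n t ↔ t = stmt8t s := by
  constructor
  · intro h
    have hb : stmt8m n s + stmt8m n t < 2 * n :=
      by have := stmt8m_lt h2r hs; have := stmt8m_lt h2r ht; omega
    have := stmt8_dvd_small hn h hb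
    unfold stmt8m at this; unfold stmt8t
    split_ifs at this ⊢ <;> omega
  · rintro rfl
    have : stmt8m n s + stmt8m n (stmt8t s) = 0 ∨ stmt8m n s + stmt8m n (stmt8t s) = n := by
      rcases Nat.eq_zero_or_pos s with rfl | hs0
      · left; rfl
      rcases Nat.mod_two_eq_zero_or_one s with he | ho
      · rw [stmt8t_even (s := s) (by omega) (by omega),
          stmt8m_even (n := n) (s := s) (by omega) (by omega),
          stmt8m_odd (n := n) (s := s - 1) (by omega)]
        right; omega
      · rw [stmt8t_odd (s := s) (by omega), stmt8m_odd (n := n) (s := s) (by omega),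
          stmt8m_even (n := n) (s := s + 1) (by omega) (by omega)]
        right; omega
    rcases this with h | h <;> simp [h]

lemma stmt8_sum_pow {F : Type*} [Field F] {n : ℕ} (hn : 0 < n) {ω : F}
    (hω : IsPrimitiveRoot ω n) (c : ℕ) :
    ∑ k : Fin n, ω ^ (c * k.val) = if n ∣ c then (n : F) else 0 := by
  have h1 : ∀ k : ℕ, ω ^ (c * k) = (ω ^ c) ^ k := fun k => pow_mul ω c k
  simp_rw [h1]
  rw [Fin.sum_univ_eq_sum_range (fun i => (ω ^ c) ^ i) n]
  split_ifs with h
  · rw [(hω.pow_eq_one_iff_dvd c).mpr h]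
    simp
  · have hne : ω ^ c ≠ 1 := fun he => h ((hω.pow_eq_one_iff_dvd c).mp he)
    rw [geom_sum_eq hne, ← pow_mul, mul_comm, pow_mul, hω.pow_eq_one, one_pow,
      sub_self, zero_div]

/-- The code spanned by the `2r+1` Fourier rows `e_0, e_1, e_{n-1}, e_2, e_{n-2}, …,
e_r, e_{n-r}` (with `2r < n`) is LCD (`C ∩ C^⊥ = 0`) and every nonzero codeword has
Hamming weight at least `n - 2r`; it is an LCD MDS `[n, 2r+1, n-2r]` code. -/
theorem stmt8 (F : Type*) [Field F] [DecidableEq F] (n r : ℕ) (hn : 0 < n)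
    (hchar : (n : F) ≠ 0) (ω : F) (hω : IsPrimitiveRoot ω n)
    (hr : 1 ≤ r) (h2r : 2 * r < n)
    (A : Matrix (Fin (2 * r + 1)) (Fin n) F)
    (hA : ∀ (s : Fin (2 * r + 1)) (j : Fin n), A s j =
      ω ^ ((if s.val = 0 then 0 else if s.val % 2 = 1 then (s.val + 1) / 2
        else n - s.val / 2) * j.val))
    (C : Submodule F (Fin n → F))
    (hC : C = Submodule.span F (Set.range fun s : Fin (2 * r + 1) => A s)) :
    (∀ x ∈ C, (∀ c ∈ C, ∑ k : Fin n, x k * c k = 0) → x = 0) ∧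
      ∀ v : Fin (2 * r + 1) → F, v ≠ 0 →
        n - 2 * r ≤ hammingNorm (Matrix.vecMul v A) := by
  subst hC
  have hA' : ∀ (s : Fin (2 * r + 1)) (j : Fin n),
      A s j = ω ^ (stmt8m n s.val * j.val) := by
    intro s j; rw [hA]; rfl
  have hsle : ∀ s : Fin (2 * r + 1), s.val ≤ 2 * r := fun s => by omega
  -- the Gram computation
  have hrow : ∀ s t : Fin (2 * r + 1), (∑ k : Fin n, A s k * A t k) =
      if t.val = stmt8t s.val then (n : F) else 0 := by
    intro s t
    have : ∀ k : Fin n, A s k * A t k =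
        ω ^ ((stmt8m n s.val + stmt8m n t.val) * k.val) := by
      intro k; rw [hA', hA', ← pow_add, ← add_mul]
    simp_rw [this]
    rw [stmt8_sum_pow hn hω]
    congr 1
    simp [stmt8_dvd_iff hn h2r (hsle s) (hsle t)]
  -- τ as a self-map of Fin (2r+1)
  set τ : Fin (2 * r + 1) → Fin (2 * r + 1) :=
    fun t => ⟨stmt8t t.val, by have := stmt8t_le hr (hsle t); omega⟩ with hτ
  have hτinv : ∀ t, τ (τ t) = t := by
    intro t; apply Fin.ext; simp [hτ, stmt8t_invol]
  constructor
  · -- LCD part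
    intro x hx horth
    rw [Submodule.mem_span_range_iff_exists_fun] at hx
    obtain ⟨v, hv⟩ := hx
    have hv0 : ∀ t : Fin (2 * r + 1), v t = 0 := by
      intro t
      have hmem : A (τ t) ∈ Submodule.span F
          (Set.range fun s : Fin (2 * r + 1) => A s) :=
        Submodule.subset_span ⟨τ t, rfl⟩
      have h0 := horth (A (τ t)) hmem
      rw [← hv] at h0
      have hcalc : (∑ k : Fin n, (∑ s : Fin (2 * r + 1), v s • A s) k * A (τ t) k)
          = v t * n := by
        calc (∑ k : Fin n, (∑ s : Fin (2 * r + 1), v s • A s) k * A (τ t) k)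
            = ∑ k : Fin n, ∑ s : Fin (2 * r + 1), v s * (A s k * A (τ t) k) := by
              apply Finset.sum_congr rfl
              intro k _
              rw [Finset.sum_apply, Finset.sum_mul]
              exact Finset.sum_congr rfl fun s _ => by
                simp [Pi.smul_apply, smul_eq_mul, mul_assoc]
          _ = ∑ s : Fin (2 * r + 1), v s * ∑ k : Fin n, A s k * A (τ t) k := by
              rw [Finset.sum_comm]
              exact Finset.sum_congr rfl fun s _ => by rw [Finset.mul_sum]
          _ = ∑ s : Fin (2 * r + 1), v s *
                (if s = t then (n : F) else 0) := by
              apply Finset.sum_congr rfl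
              intro s _
              rw [hrow]
              congr 1
              have hinj : Function.Injective stmt8t :=
                Function.LeftInverse.injective stmt8t_invol
              have : ((τ t).val = stmt8t s.val) ↔ s = t := by
                simp only [hτ]
                constructor
                · intro h
                  exact Fin.ext (hinj h.symm)
                · rintro rfl; rfl
              simp [this]
          _ = v t * n := by simp
      rw [hcalc] at h0
      have := mul_eq_zero.mp h0
      tauto
    rw [← hv]
    simp [hv0]
  · -- minimum distance part
    intro v hvne
    set x := Matrix.vecMul v A with hx
    have hxj : ∀ j : Fin n, x j = ∑ s : Fin (2 * r + 1), v s * A s j := by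
      intro j
      simp [hx, Matrix.vecMul, dotProduct]
    set P : Polynomial F :=
      ∑ s : Fin (2 * r + 1), Polynomial.C (v s) * Polynomial.X ^ (stmt8s r s.val)
      with hP
    have hPdeg : P.natDegree ≤ 2 * r := by
      apply Polynomial.natDegree_sum_le_of_forall_le
      intro s _
      refine le_trans (Polynomial.natDegree_mul_le) ?_
      simp [Polynomial.natDegree_X_pow, stmt8s_le (hsle s)]
    have hPcoeff : ∀ s : Fin (2 * r + 1), P.coeff (stmt8s r s.val) = v s := by
      intro s
      rw [hP, Polynomial.finset_sum_coeff]
      rw [Finset.sum_eq_single s]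
      · simp [Polynomial.coeff_C_mul, Polynomial.coeff_X_pow]
      · intro t _ hts
        simp only [Polynomial.coeff_C_mul, Polynomial.coeff_X_pow]
        have : ¬ (stmt8s r s.val = stmt8s r t.val) := fun h =>
          hts (Fin.ext (stmt8s_inj (hsle t) (hsle s) h.symm))
        simp [this]
      · simp
    have hPne : P ≠ 0 := by
      obtain ⟨s0, hs0⟩ := Function.ne_iff.mp hvne
      intro h
      apply hs0
      rw [← hPcoeff s0, h]
      simp
    have heval : ∀ j : Fin n, ω ^ (r * j.val) * x j = P.eval (ω ^ j.val) := by
      intro j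
      rw [hxj, hP]
      rw [Polynomial.eval_finset_sum, Finset.mul_sum]
      apply Finset.sum_congr rfl
      intro s _
      rw [Polynomial.eval_mul, Polynomial.eval_C, Polynomial.eval_pow,
        Polynomial.eval_X, hA']
      rw [mul_left_comm, ← pow_add, ← add_mul]
      congr 1
      rw [← pow_mul, mul_comm j.val (stmt8s r s.val)]
      rcases stmt8_m_add_r (s := s.val) h2r (hsle s) with h | h
      · rw [add_comm r (stmt8m n s.val), h]
      · rw [add_comm r (stmt8m n s.val), h, add_mul, pow_add]
        rw [pow_mul, pow_mul, hω.pow_eq_one, one_pow, mul_one]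
    have hzero : ∀ j : Fin n, x j = 0 ↔ P.eval (ω ^ j.val) = 0 := by
      intro j
      rw [← heval j]
      constructor
      · intro h; rw [h, mul_zero]
      · intro h
        rcases mul_eq_zero.mp h with h | h
        · exact absurd h (pow_ne_zero _ (hω.ne_zero hn.ne'))
        · exact h
    have hZcard : (Finset.univ.filter (fun j : Fin n => x j = 0)).card ≤ 2 * r := by
      refine le_trans (Finset.card_le_card_of_injOn (fun j : Fin n => ω ^ j.val)
        ?_ ?_) (le_trans (Multiset.toFinset_card_le _)
          (le_trans (Polynomial.card_roots' P) hPdeg))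
      · intro j hj
        rw [Finset.mem_coe, Finset.mem_filter] at hj
        rw [Finset.mem_coe, Multiset.mem_toFinset, Polynomial.mem_roots']
        exact ⟨hPne, (hzero j).mp hj.2⟩
      · intro a ha b hb hab
        exact Fin.ext (hω.pow_inj a.isLt b.isLt hab)
    have hsplit := Finset.card_filter_add_card_filter_not
      (s := (Finset.univ : Finset (Fin n))) (fun j => x j = 0)
    simp only [Finset.card_univ, Fintype.card_fin] at hsplit
    have : hammingNorm x = (Finset.univ.filter (fun j : Fin n => ¬ x j = 0)).card := by
      rfl
    omega
end

section
/- Let F be a field, n a positive integer whose image in F is nonzero, ω ∈ F a primitive n-th root of unity, and e_0,…,e_{n−1} the rows of the Fourier matrix F_n. Let r > ⌊n/2⌋, let A be the r×n matrix with rows e_0, e_1, …, e_{r−1}, and let B be the r×n matrix whose first 2r−n rows are zero and whose last n−r rows are e_r, e_{r+1}, …, e_{n−1}. Then for every nonzero vector P ∈ F^r, wt(PA) + wt(PB) ≥ 2(n−r) + 1; that is, the polynomial codeword P(A + Bz) has weight at least 2(n−r)+1. -/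
open Polynomial Finset

/-- A nonzero polynomial of degree ≤ d has at most d zeros among the n distinct
powers of a primitive n-th root of unity, so at least n - d nonzero values. -/
lemma fourier_key {F : Type*} [Field F] [DecidableEq F] {n : ℕ} {ω : F}
    (hω : IsPrimitiveRoot ω n) (f : Polynomial F) (hf : f ≠ 0) (d : ℕ)
    (hd : f.natDegree ≤ d) :
    n - d ≤ hammingNorm (fun j : Fin n => f.eval (ω ^ j.val)) := by
  classical
  have hcard : (Finset.univ.filter fun j : Fin n => f.eval (ω ^ j.val) = 0).card ≤ d := by
    calc (Finset.univ.filter fun j : Fin n => f.eval (ω ^ j.val) = 0).card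
        ≤ f.roots.toFinset.card := by
          apply Finset.card_le_card_of_injOn (fun j => ω ^ j.val)
          · intro j hj
            simp only [Finset.mem_coe, Finset.mem_filter] at hj ⊢
            rw [Multiset.mem_toFinset, Polynomial.mem_roots hf]
            exact hj.2
          · intro a _ b _ hab
            exact Fin.ext (hω.pow_inj a.isLt b.isLt hab)
      _ ≤ Multiset.card f.roots := f.roots.toFinset_card_le
      _ ≤ f.natDegree := f.card_roots'
      _ ≤ d := hd
  have hsplit : ((Finset.univ : Finset (Fin n)).filter
        fun j => f.eval (ω ^ j.val) = 0).card
      + ((Finset.univ : Finset (Fin n)).filter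
        fun j => ¬ (f.eval (ω ^ j.val) = 0)).card = n := by
    rw [Finset.card_filter_add_card_filter_not]
    simp
  have : hammingNorm (fun j : Fin n => f.eval (ω ^ j.val))
      = ((Finset.univ : Finset (Fin n)).filter
        fun j => ¬ (f.eval (ω ^ j.val) = 0)).card := rfl
  omega

/-- Let `A` have rows `e_0, …, e_{r-1}` of the Fourier matrix and `B` have first `2r-n`
rows zero and last `n-r` rows `e_r, …, e_{n-1}`, with `r > ⌊n/2⌋`. Then every nonzero
`P ∈ F^r` satisfies `wt(PA) + wt(PB) ≥ 2(n-r) + 1`. -/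
theorem stmt9 (F : Type*) [Field F] [DecidableEq F] (n r : ℕ) (hn : 0 < n)
    (hchar : (n : F) ≠ 0) (ω : F) (hω : IsPrimitiveRoot ω n)
    (hr : n / 2 < r) (hrn : r ≤ n)
    (A B : Matrix (Fin r) (Fin n) F)
    (hA : ∀ (s : Fin r) (j : Fin n), A s j = ω ^ (s.val * j.val))
    (hB : ∀ (s : Fin r) (j : Fin n), B s j =
      if s.val < 2 * r - n then 0 else ω ^ ((s.val + (n - r)) * j.val)) :
    ∀ P : Fin r → F, P ≠ 0 →
      2 * (n - r) + 1 ≤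
        hammingNorm (Matrix.vecMul P A) + hammingNorm (Matrix.vecMul P B) := by
  classical
  intro P hP
  have hr1 : 1 ≤ r := by omega
  -- the polynomial f with coefficients P
  set f : Polynomial F := ∑ s : Fin r, Polynomial.C (P s) * Polynomial.X ^ (s : ℕ) with hf_def
  -- the "high part" h
  set h : Polynomial F := ∑ s ∈ Finset.univ.filter (fun s : Fin r => 2 * r - n ≤ s.val),
      Polynomial.C (P s) * Polynomial.X ^ (s : ℕ) with hh_def
  have coeff_aux : ∀ (t : Finset (Fin r)) (k : ℕ),
      (∑ s ∈ t, Polynomial.C (P s) * Polynomial.X ^ (s : ℕ)).coeff k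
        = if hk : k < r then (if ⟨k, hk⟩ ∈ t then P ⟨k, hk⟩ else 0) else 0 := by
    intro t k
    rw [Polynomial.finset_sum_coeff]
    simp only [Polynomial.coeff_C_mul, Polynomial.coeff_X_pow, mul_ite, mul_one, mul_zero]
    by_cases hk : k < r
    · rw [dif_pos hk]
      by_cases hmem : (⟨k, hk⟩ : Fin r) ∈ t
      · rw [if_pos hmem, Finset.sum_eq_single (⟨k, hk⟩ : Fin r)]
        · simp
        · intro b _ hb
          rw [if_neg]
          exact fun hbk => hb (Fin.ext (by simp only [Fin.val_mk]; omega))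
        · intro habs; exact absurd hmem habs
      · rw [if_neg hmem, Finset.sum_eq_zero]
        intro b hb
        rw [if_neg]
        intro hbk
        have hkb : (⟨k, hk⟩ : Fin r) = b := Fin.ext (by simp only [Fin.val_mk]; omega)
        exact hmem (hkb ▸ hb)
    · rw [dif_neg hk, Finset.sum_eq_zero]
      intro b _
      rw [if_neg]
      intro hbk
      exact hk (hbk ▸ b.isLt)
  have hfcoeff : ∀ k : ℕ, f.coeff k = if hk : k < r then P ⟨k, hk⟩ else 0 := by
    intro k
    rw [hf_def, coeff_aux]
    split <;> simp
  have hhcoeff : ∀ k : ℕ, h.coeff k =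
      if hk : k < r then (if 2 * r - n ≤ k then P ⟨k, hk⟩ else 0) else 0 := by
    intro k
    rw [hh_def, coeff_aux]
    split <;> simp
  -- f ≠ 0
  obtain ⟨s0, hs0⟩ := Function.ne_iff.mp hP
  have hs0' : P s0 ≠ 0 := by simpa using hs0
  have hfne : f ≠ 0 := by
    intro h0
    have := hfcoeff s0.val
    rw [h0] at this
    simp only [Polynomial.coeff_zero, s0.isLt, dif_pos] at this
    exact hs0' (by rw [← this])
  -- evaluation formulas
  have hωne : ω ≠ 0 := hω.ne_zero hn.ne'
  have hevalA : ∀ j : Fin n, Matrix.vecMul P A j = f.eval (ω ^ j.val) := by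
    intro j
    rw [hf_def, Polynomial.eval_finset_sum]
    simp only [Matrix.vecMul, dotProduct, Polynomial.eval_mul, Polynomial.eval_C,
      Polynomial.eval_pow, Polynomial.eval_X]
    apply Finset.sum_congr rfl
    intro s _
    rw [hA s j, ← pow_mul, mul_comm (j : ℕ)]
  have hevalB : ∀ j : Fin n,
      Matrix.vecMul P B j = (ω ^ j.val) ^ (n - r) * h.eval (ω ^ j.val) := by
    intro j
    rw [hh_def, Polynomial.eval_finset_sum, Finset.mul_sum]
    simp only [Matrix.vecMul, dotProduct, Polynomial.eval_mul, Polynomial.eval_C,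
      Polynomial.eval_pow, Polynomial.eval_X]
    rw [← Finset.sum_filter_add_sum_filter_not Finset.univ
      (fun s : Fin r => 2 * r - n ≤ s.val)]
    have h2 : ∑ s ∈ Finset.univ.filter (fun s : Fin r => ¬ 2 * r - n ≤ s.val),
        P s * B s j = 0 := by
      apply Finset.sum_eq_zero
      intro s hs
      simp only [Finset.mem_filter, not_le] at hs
      rw [hB s j, if_pos hs.2, mul_zero]
    rw [h2, add_zero]
    apply Finset.sum_congr rfl
    intro s hs
    simp only [Finset.mem_filter] at hs
    rw [hB s j, if_neg (by omega),
      show ((s : ℕ) + (n - r)) * (j : ℕ) = (j : ℕ) * (n - r) + (j : ℕ) * (s : ℕ) by ring,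
      pow_add]
    ring
  -- hamming norm of PA
  have hnormA : hammingNorm (Matrix.vecMul P A)
      = hammingNorm (fun j : Fin n => f.eval (ω ^ j.val)) := by
    unfold hammingNorm
    apply Finset.card_bij (fun j _ => j) <;> try (intro a ha; simp_all [hevalA])
  have hp : ∀ j : Fin n, (ω ^ (j : ℕ)) ^ (n - r) ≠ 0 :=
    fun j => pow_ne_zero _ (pow_ne_zero _ hωne)
  have hnormB : hammingNorm (Matrix.vecMul P B)
      = hammingNorm (fun j : Fin n => h.eval (ω ^ j.val)) := by
    unfold hammingNorm
    apply Finset.card_bij (fun j _ => j) <;>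
      try (intro a ha; simp_all [hevalB, hp, mul_ne_zero_iff])
  rw [hnormA, hnormB]
  by_cases hc : ∀ s : Fin r, 2 * r - n ≤ s.val → P s = 0
  · -- high part vanishes; f has low degree
    have hdf : f.natDegree ≤ 2 * r - n - 1 := by
      rw [Polynomial.natDegree_le_iff_coeff_eq_zero]
      intro m hm
      rw [hfcoeff]
      split
      · next hmr => exact hc ⟨m, hmr⟩ (by simp only [Fin.val_mk]; omega)
      · rfl
    have := fourier_key hω f hfne _ hdf
    omega
  · push_neg at hc
    obtain ⟨s1, hs1a, hs1b⟩ := hc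
    have hhne : h ≠ 0 := by
      intro h0
      have := hhcoeff s1.val
      rw [h0] at this
      simp only [Polynomial.coeff_zero, s1.isLt, dif_pos, if_pos hs1a] at this
      exact hs1b (by rw [← this])
    have hdf : f.natDegree ≤ r - 1 := by
      rw [Polynomial.natDegree_le_iff_coeff_eq_zero]
      intro m hm
      rw [hfcoeff, dif_neg (by omega)]
    have hdh : h.natDegree ≤ r - 1 := by
      rw [Polynomial.natDegree_le_iff_coeff_eq_zero]
      intro m hm
      rw [hhcoeff, dif_neg (by omega)]
    have h1 := fourier_key hω f hfne _ hdf
    have h2 := fourier_key hω h hhne _ hdh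
    omega
end

section
/- Let F be a field, n a positive integer whose image in F is nonzero, ω ∈ F a primitive n-th root of unity, and e_0,…,e_{n−1} the rows of the Fourier matrix F_n, indices read modulo n. Let r > ⌊n/2⌋ and let k be an integer with gcd(k, n) = 1. Let A be the r×n matrix whose rows are e_a, e_{a+k}, …, e_{a+(r−1)k} (r rows in arithmetic sequence with difference k) and let B be the r×n matrix whose first 2r−n rows are zero and whose last n−r rows are the remaining rows e_{a+rk}, e_{a+(r+1)k}, …, e_{a+(n−1)k} of F_n (also in arithmetic sequence with difference k). Then for every nonzero vector P ∈ F^r, wt(PA) + wt(PB) ≥ 2(n−r) + 1. -/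
open Polynomial Finset

lemma count_roots_le {F : Type*} [Field F] [DecidableEq F] {n : ℕ} {Q : F[X]} (hQ : Q ≠ 0)
    {g : Fin n → F} (hg : Function.Injective g) :
    (Finset.univ.filter fun j => Q.eval (g j) = 0).card ≤ Q.natDegree := by
  classical
  rw [← Finset.card_image_of_injective _ hg]
  calc ((Finset.univ.filter fun j => Q.eval (g j) = 0).image g).card
      ≤ Q.roots.toFinset.card := by
        apply Finset.card_le_card
        intro x hx
        simp only [Finset.mem_image, Finset.mem_filter] at hx
        obtain ⟨j, ⟨-, hj⟩, rfl⟩ := hx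
        simp [Polynomial.mem_roots, hQ, Polynomial.IsRoot, hj]
    _ ≤ Multiset.card Q.roots := Multiset.toFinset_card_le _
    _ ≤ Q.natDegree := Polynomial.card_roots' Q

lemma norm_ge {F : Type*} [Field F] [DecidableEq F] {n : ℕ} {v : Fin n → F} {Q : F[X]}
    (hQ : Q ≠ 0) {g : Fin n → F} (hg : Function.Injective g)
    (h : ∀ j, v j = 0 ↔ Q.eval (g j) = 0) :
    n - Q.natDegree ≤ hammingNorm v := by
  classical
  have h1 : (Finset.univ.filter fun j => v j = 0).card ≤ Q.natDegree := by
    have : (Finset.univ.filter fun j => v j = 0)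
        = (Finset.univ.filter fun j => Q.eval (g j) = 0) := by
      apply Finset.filter_congr; intro j _; simpa using h j
    rw [this]; exact count_roots_le hQ hg
  have h2 : (Finset.univ.filter fun j => v j = 0).card + hammingNorm v = n := by
    have := Finset.card_filter_add_card_filter_not (s := (Finset.univ : Finset (Fin n)))
      (p := fun j => v j = 0)
    simpa [hammingNorm] using this
  omega

lemma inj_pow {F : Type*} [Field F] {n : ℕ} {ω : F} (hω : IsPrimitiveRoot ω n)
    (hω0 : ω ≠ 0) {k : ℤ} (hk : Int.gcd k n = 1) :
    Function.Injective (fun j : Fin n => ω ^ (k * (j.val : ℤ))) := by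
  intro j₁ j₂ h
  simp only at h
  have h1 : ω ^ (k * ((j₁.val : ℤ) - (j₂.val : ℤ))) = 1 := by
    rw [mul_sub, zpow_sub₀ hω0, h, div_self (zpow_ne_zero _ hω0)]
  have h2 : (n : ℤ) ∣ k * ((j₁.val : ℤ) - (j₂.val : ℤ)) :=
    (hω.zpow_eq_one_iff_dvd _).mp h1
  have hcop : IsCoprime (n : ℤ) k := by
    rw [Int.isCoprime_iff_gcd_eq_one, Int.gcd_comm]; exact hk
  have h3 : (n : ℤ) ∣ ((j₁.val : ℤ) - (j₂.val : ℤ)) := hcop.dvd_of_dvd_mul_left h2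
  have h4 : (j₁.val : ℤ) - (j₂.val : ℤ) = 0 := by
    by_contra hne
    have := Int.le_of_dvd (abs_pos.mpr hne) ((dvd_abs _ _).mpr h3)
    have b1 := j₁.isLt; have b2 := j₂.isLt
    have h5 : |(j₁.val : ℤ) - (j₂.val : ℤ)| < n := by rw [abs_sub_lt_iff]; omega
    omega
  ext
  omega

/-- Generalisation of the weight lemma to rows in arithmetic progression with difference
`k`, `gcd(k,n)=1`: with `A` the rows `e_a, e_{a+k}, …, e_{a+(r-1)k}` and `B` having first
`2r-n` rows zero and last `n-r` rows `e_{a+rk}, …, e_{a+(n-1)k}`, every nonzero `P ∈ F^r`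
satisfies `wt(PA) + wt(PB) ≥ 2(n-r) + 1`. -/
theorem stmt10 (F : Type*) [Field F] [DecidableEq F] (n r : ℕ) (hn : 0 < n)
    (hchar : (n : F) ≠ 0) (ω : F) (hω : IsPrimitiveRoot ω n)
    (hr : n / 2 < r) (hrn : r ≤ n) (a k : ℤ) (hk : Int.gcd k n = 1)
    (A B : Matrix (Fin r) (Fin n) F)
    (hA : ∀ (s : Fin r) (j : Fin n),
      A s j = ω ^ ((a + (s.val : ℤ) * k) * (j.val : ℤ)))
    (hB : ∀ (s : Fin r) (j : Fin n), B s j =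
      if s.val < 2 * r - n then 0
      else ω ^ ((a + ((s.val : ℤ) + (n : ℤ) - (r : ℤ)) * k) * (j.val : ℤ))) :
    ∀ P : Fin r → F, P ≠ 0 →
      2 * (n - r) + 1 ≤
        hammingNorm (Matrix.vecMul P A) + hammingNorm (Matrix.vecMul P B) := by
  intro P hP
  classical
  have hω0 : ω ≠ 0 := hω.ne_zero hn.ne'
  set δ : ℕ := 2 * r - n with hδ
  set g : Fin n → F := fun j => ω ^ (k * (j.val : ℤ)) with hg
  have hginj : Function.Injective g := inj_pow hω hω0 hk
  have hg0 : ∀ j, g j ≠ 0 := fun j => zpow_ne_zero _ hω0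
  obtain ⟨s₀, hs₀⟩ : ∃ s, P s ≠ 0 := by
    by_contra hcc; push_neg at hcc; exact hP (funext hcc)
  have hgp : ∀ (j : Fin n) (t : ℕ), ω ^ (k * (j.val : ℤ) * (t : ℤ)) = g j ^ t := by
    intro j t
    simp only [hg]
    rw [← zpow_natCast (ω ^ (k * (j.val : ℤ))) t, ← zpow_mul]
  -- the polynomial for A
  set Q : F[X] := ∑ s : Fin r, Polynomial.C (P s) * Polynomial.X ^ (s.val) with hQdef
  have hQcoeff : ∀ s : Fin r, Q.coeff s.val = P s := by
    intro s
    rw [hQdef, Polynomial.finset_sum_coeff]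
    rw [Finset.sum_eq_single s]
    · simp
    · intro b _ hb
      have : s.val ≠ b.val := fun h => hb (Fin.ext h.symm)
      simp [Polynomial.coeff_X_pow, this]
    · simp
  have hQne : Q ≠ 0 := fun h => hs₀ (by rw [← hQcoeff s₀, h, Polynomial.coeff_zero])
  have hvA : ∀ j, Matrix.vecMul P A j = ω ^ (a * (j.val : ℤ)) * Q.eval (g j) := by
    intro j
    have hterm : ∀ s : Fin r,
        ω ^ ((a + (s.val : ℤ) * k) * (j.val : ℤ))
          = ω ^ (a * (j.val : ℤ)) * (g j) ^ (s.val) := by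
      intro s
      have he : (a + (s.val : ℤ) * k) * (j.val : ℤ)
          = a * (j.val : ℤ) + (k * (j.val : ℤ)) * (s.val : ℤ) := by ring
      rw [he, zpow_add₀ hω0, hgp]
    simp only [Matrix.vecMul, dotProduct, hA, hterm, hQdef,
      Polynomial.eval_finset_sum, Polynomial.eval_mul, Polynomial.eval_C,
      Polynomial.eval_pow, Polynomial.eval_X]
    rw [Finset.mul_sum]
    congr 1; ext s; ring
  have hA0iff : ∀ j, Matrix.vecMul P A j = 0 ↔ Q.eval (g j) = 0 := by
    intro j
    rw [hvA j]
    simp [zpow_ne_zero, hω0]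
  have hwA : n - Q.natDegree ≤ hammingNorm (Matrix.vecMul P A) := norm_ge hQne hginj hA0iff
  by_cases hc : ∀ s : Fin r, δ ≤ s.val → P s = 0
  · -- B-part vanishes; Q has small degree
    have hdeg : Q.natDegree ≤ δ - 1 := by
      apply Polynomial.natDegree_sum_le_of_forall_le
      intro s _
      by_cases hsδ : δ ≤ s.val
      · rw [hc s hsδ]; simp
      · exact le_trans (Polynomial.natDegree_C_mul_X_pow_le _ _) (by omega)
    have hδ1 : 1 ≤ δ := by omega
    have : 2 * (n - r) + 1 ≤ hammingNorm (Matrix.vecMul P A) := by omega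
    omega
  · push_neg at hc
    obtain ⟨s₁, hs₁δ, hs₁⟩ := hc
    have hdegQ : Q.natDegree ≤ r - 1 := by
      apply Polynomial.natDegree_sum_le_of_forall_le
      intro s _
      exact le_trans (Polynomial.natDegree_C_mul_X_pow_le _ _) (by omega)
    -- the polynomial for B
    set S : F[X] := ∑ s : Fin r,
      if δ ≤ s.val then Polynomial.C (P s) * Polynomial.X ^ (s.val - δ) else 0 with hSdef
    have hScoeff : ∀ s : Fin r, δ ≤ s.val → S.coeff (s.val - δ) = P s := by
      intro s hsδ
      rw [hSdef, Polynomial.finset_sum_coeff]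
      rw [Finset.sum_eq_single s]
      · simp [hsδ]
      · intro b _ hb
        by_cases hbδ : δ ≤ b.val
        · have : (s.val - δ) ≠ (b.val - δ) := by
            intro h
            exact hb (Fin.ext (by omega))
          simp [hbδ, Polynomial.coeff_X_pow, this]
        · simp [hbδ]
      · simp
    have hSne : S ≠ 0 := fun h => hs₁ (by rw [← hScoeff s₁ hs₁δ, h, Polynomial.coeff_zero])
    have hdegS : S.natDegree ≤ n - r - 1 := by
      apply Polynomial.natDegree_sum_le_of_forall_le
      intro s _
      by_cases hsδ : δ ≤ s.val
      · rw [if_pos hsδ]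
        refine le_trans (Polynomial.natDegree_C_mul_X_pow_le _ _) ?_
        have := s.isLt
        omega
      · rw [if_neg hsδ]; simp
    have hvB : ∀ j, Matrix.vecMul P B j
        = ω ^ (a * (j.val : ℤ)) * (g j) ^ r * S.eval (g j) := by
      intro j
      have hterm : ∀ s : Fin r, δ ≤ s.val →
          ω ^ ((a + ((s.val : ℤ) + (n : ℤ) - (r : ℤ)) * k) * (j.val : ℤ))
            = ω ^ (a * (j.val : ℤ)) * (g j) ^ r * (g j) ^ (s.val - δ) := by
        intro s hsδ
        have h1 : ((s.val - δ : ℕ) : ℤ) = (s.val : ℤ) + (n : ℤ) - 2 * (r : ℤ) := by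
          omega
        have he : (a + ((s.val : ℤ) + (n : ℤ) - (r : ℤ)) * k) * (j.val : ℤ)
            = a * (j.val : ℤ) + (k * (j.val : ℤ)) * (r : ℤ)
              + (k * (j.val : ℤ)) * ((s.val - δ : ℕ) : ℤ) := by
          rw [h1]; ring
        rw [he, zpow_add₀ hω0, zpow_add₀ hω0, hgp, hgp]
      have hSeval : S.eval (g j)
          = ∑ s : Fin r, if δ ≤ s.val then P s * (g j) ^ (s.val - δ) else 0 := by
        rw [hSdef, Polynomial.eval_finset_sum]
        congr 1; ext s
        by_cases hsδ : δ ≤ s.val <;> simp [hsδ]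
      simp only [Matrix.vecMul, dotProduct, hB]
      rw [hSeval, Finset.mul_sum]
      congr 1; ext s
      by_cases hsδ : δ ≤ s.val
      · rw [if_neg (by omega), if_pos hsδ, hterm s hsδ]
        ring
      · rw [if_pos (by omega), if_neg hsδ]
        simp
    have hB0iff : ∀ j, Matrix.vecMul P B j = 0 ↔ S.eval (g j) = 0 := by
      intro j
      rw [hvB j]
      simp [zpow_ne_zero, hω0, pow_ne_zero, hg0 j]
    have hwB : n - S.natDegree ≤ hammingNorm (Matrix.vecMul P B) := norm_ge hSne hginj hB0iff
    omega
end

section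
/- Let F be a field, n a positive integer whose image in F is nonzero, ω ∈ F a primitive n-th root of unity, e_0,…,e_{n−1} the rows of the Fourier matrix F_n, and f_j = (1, ω^{−j}, …, ω^{−(n−1)j})^T. Let r > ⌊n/2⌋, A the r×n matrix with rows e_0,…,e_{r−1}, and B the r×n matrix whose first 2r−n rows are zero and whose last n−r rows are e_r,…,e_{n−1}. Let K be the constant n×r matrix whose columns are n^{−1}f_0, n^{−1}f_1, …, n^{−1}f_{r−1}. Then (A + Bz)·K = I_r, the r×r identity matrix over F[z]; thus G[z] = A + Bz has a right polynomial inverse and generates a non-catastrophic convolutional code. -/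
lemma key12 {F : Type*} [Field F] {n : ℕ} (hn : 0 < n) {ω : F}
    (hω : IsPrimitiveRoot ω n) {a b : ℕ} (ha : a < n) (hb : b < n) :
    ∑ j : Fin n, ω ^ (a * j.val) * ω⁻¹ ^ (j.val * b) =
      if a = b then (n : F) else 0 := by
  have hω0 : ω ≠ 0 := hω.ne_zero hn.ne'
  have hterm : ∀ j : Fin n, ω ^ (a * j.val) * ω⁻¹ ^ (j.val * b)
      = (ω ^ a * (ω ^ b)⁻¹) ^ j.val := by
    intro j
    rw [mul_pow, ← pow_mul, ← inv_pow, ← pow_mul, mul_comm (b : ℕ) j.val]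
  simp only [hterm]
  set x : F := ω ^ a * (ω ^ b)⁻¹ with hx
  by_cases hab : a = b
  · subst hab
    simp [hx, mul_inv_cancel₀ (pow_ne_zero _ hω0)]
  · simp only [hab, if_false]
    have hx1 : x ≠ 1 := by
      intro h
      apply hab
      have : ω ^ a = ω ^ b := by
        field_simp [hx] at h
        rw [hx, mul_inv_eq_one₀ (pow_ne_zero _ hω0)] at h
        exact h
      exact hω.pow_inj ha hb this
    have hxn : x ^ n = 1 := by
      have h1 : (ω ^ a) ^ n = 1 := by
        rw [← pow_mul, mul_comm, pow_mul, hω.pow_eq_one, one_pow]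
      have h2 : (ω ^ b) ^ n = 1 := by
        rw [← pow_mul, mul_comm, pow_mul, hω.pow_eq_one, one_pow]
      rw [hx, mul_pow, h1, inv_pow, h2, inv_one, mul_one]
    have := geom_sum_eq hx1 n
    rw [Fin.sum_univ_eq_sum_range]
    rw [this, hxn, sub_self, zero_div]

/-- The convolutional generator `G[z] = A + Bz` has a right polynomial inverse: the
constant matrix `K` with columns `n⁻¹ f_0, …, n⁻¹ f_{r-1}` satisfies `G[z]·K = I_r`, so
the code generated is non-catastrophic. -/
theorem stmt12 (F : Type*) [Field F] (n r : ℕ) (hn : 0 < n)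
    (hchar : (n : F) ≠ 0) (ω : F) (hω : IsPrimitiveRoot ω n)
    (hr : n / 2 < r) (hrn : r ≤ n)
    (G : Matrix (Fin r) (Fin n) (Polynomial F))
    (hG : ∀ (s : Fin r) (j : Fin n), G s j =
      Polynomial.C (ω ^ (s.val * j.val)) +
        Polynomial.C (if s.val < 2 * r - n then 0
          else ω ^ ((s.val + (n - r)) * j.val)) * Polynomial.X)
    (K : Matrix (Fin n) (Fin r) (Polynomial F))
    (hK : ∀ (j : Fin n) (s : Fin r),
      K j s = Polynomial.C ((n : F)⁻¹ * ω⁻¹ ^ (j.val * s.val))) :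
    G * K = 1 := by
  refine Matrix.ext fun s t => ?_
  rw [Matrix.mul_apply]
  simp only [hG, hK]
  have step : ∀ j : Fin n,
      (Polynomial.C (ω ^ (s.val * j.val)) +
        Polynomial.C (if s.val < 2 * r - n then (0:F)
          else ω ^ ((s.val + (n - r)) * j.val)) * Polynomial.X) *
        Polynomial.C ((n : F)⁻¹ * ω⁻¹ ^ (j.val * t.val)) =
      Polynomial.C ((n:F)⁻¹ * (ω ^ (s.val * j.val) * ω⁻¹ ^ (j.val * t.val))) +
      Polynomial.C ((n:F)⁻¹ * ((if s.val < 2 * r - n then (0:F)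
          else ω ^ ((s.val + (n - r)) * j.val)) * ω⁻¹ ^ (j.val * t.val))) *
        Polynomial.X := by
    intro j
    simp only [Polynomial.C_mul]
    ring
  rw [Finset.sum_congr rfl fun j _ => step j]
  rw [Finset.sum_add_distrib, ← Finset.sum_mul, ← map_sum, ← map_sum,
    ← Finset.mul_sum, ← Finset.mul_sum]
  have h1 : ∑ j : Fin n, ω ^ (s.val * j.val) * ω⁻¹ ^ (j.val * t.val) =
      if s.val = t.val then (n : F) else 0 :=
    key12 hn hω (lt_of_lt_of_le s.isLt hrn) (lt_of_lt_of_le t.isLt hrn)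
  have h2 : ∑ j : Fin n, (if s.val < 2 * r - n then (0:F)
      else ω ^ ((s.val + (n - r)) * j.val)) * ω⁻¹ ^ (j.val * t.val) = 0 := by
    by_cases hs : s.val < 2 * r - n
    · simp only [if_pos hs, zero_mul, Finset.sum_const_zero]
    · simp only [hs, if_false]
      have hslt := s.isLt
      have htlt := t.isLt
      have ha : s.val + (n - r) < n := by omega
      have hab : s.val + (n - r) ≠ t.val := by omega
      rw [key12 hn hω ha (lt_of_lt_of_le t.isLt hrn), if_neg hab]
  rw [h1, h2, mul_zero, map_zero, zero_mul, add_zero]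
  rw [Matrix.one_apply]
  by_cases hst : s = t
  · rw [if_pos hst, if_pos (by rw [hst]), inv_mul_cancel₀ hchar, Polynomial.C_1]
  · rw [if_neg hst, if_neg (fun h => hst (Fin.val_injective h)), mul_zero,
      Polynomial.C_0]
end

section
/- Let F be a field, n a positive integer whose image in F is nonzero, ω ∈ F a primitive n-th root of unity, e_0,…,e_{n−1} the rows of the Fourier matrix F_n, and f_j = (1, ω^{−j}, …, ω^{−(n−1)j})^T. Let r > ⌊n/2⌋, A the r×n matrix with rows e_0,…,e_{r−1}, and B the r×n matrix whose first 2r−n rows are zero and whose last n−r rows are e_r,…,e_{n−1}. Let C_0 be the n×(n−r) matrix with columns f_r, f_{r+1}, …, f_{n−1} and C_1 the n×(n−r) matrix with columns f_{2r−n}, f_{2r−n+1}, …, f_{r−1}. Then (A + Bz)·(C_0 − C_1 z) = 0; that is, H^T[z] = C_0 − C_1 z is a control (check) matrix for the convolutional code generated by G[z] = A + Bz. -/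
open Polynomial Finset

lemma key13 {F : Type*} [Field F] {n : ℕ} (hn : 0 < n) {ω : F} (hω : IsPrimitiveRoot ω n)
    (a b : ℕ) (ha : a < n) (hb : b < n) :
    ∑ j : Fin n, ω ^ (a * j.val) * ω⁻¹ ^ (b * j.val) = if a = b then (n : F) else 0 := by
  have hω0 : ω ≠ 0 := hω.ne_zero hn.ne'
  set ζ := ω ^ a * ω⁻¹ ^ b with hζ
  have hterm : ∀ j : Fin n, ω ^ (a * j.val) * ω⁻¹ ^ (b * j.val) = ζ ^ j.val := by
    intro j; rw [pow_mul, pow_mul, mul_pow]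
  rw [Finset.sum_congr rfl (fun j _ => hterm j), Fin.sum_univ_eq_sum_range (fun j => ζ ^ j) n]
  by_cases hab : a = b
  · subst hab
    have : ζ = 1 := by
      rw [hζ, inv_pow, mul_inv_cancel₀ (pow_ne_zero _ hω0)]
    simp [this]
  · rw [if_neg hab]
    have hζ1 : ζ ≠ 1 := by
      intro h
      apply hab
      apply hω.pow_inj ha hb
      have : ω ^ a * (ω ^ b)⁻¹ = 1 := by rw [← inv_pow]; exact h
      field_simp at this
      exact this
    have hζn : ζ ^ n = 1 := by
      have h1 : (ω ^ a) ^ n = 1 := by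
        rw [← pow_mul, mul_comm, pow_mul, hω.pow_eq_one, one_pow]
      have h2 : (ω⁻¹ ^ b) ^ n = 1 := by
        rw [inv_pow, inv_pow, ← pow_mul, mul_comm, pow_mul, hω.pow_eq_one, one_pow, inv_one]
      rw [hζ, mul_pow, h1, h2, mul_one]
    rw [geom_sum_eq hζ1, hζn]
    simp

/-- A control matrix for the convolutional code generated by `G[z] = A + Bz`: with `C₀`
the matrix with columns `f_r, …, f_{n-1}` and `C₁` the matrix with columns
`f_{2r-n}, …, f_{r-1}`, one has `G[z]·(C₀ - C₁ z) = 0`. -/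
theorem stmt13 (F : Type*) [Field F] (n r : ℕ) (hn : 0 < n)
    (hchar : (n : F) ≠ 0) (ω : F) (hω : IsPrimitiveRoot ω n)
    (hr : n / 2 < r) (hrn : r ≤ n)
    (G : Matrix (Fin r) (Fin n) (Polynomial F))
    (hG : ∀ (s : Fin r) (j : Fin n), G s j =
      Polynomial.C (ω ^ (s.val * j.val)) +
        Polynomial.C (if s.val < 2 * r - n then 0
          else ω ^ ((s.val + (n - r)) * j.val)) * Polynomial.X)
    (H : Matrix (Fin n) (Fin (n - r)) (Polynomial F))
    (hH : ∀ (j : Fin n) (c : Fin (n - r)), H j c =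
      Polynomial.C (ω⁻¹ ^ ((r + c.val) * j.val)) -
        Polynomial.C (ω⁻¹ ^ ((2 * r - n + c.val) * j.val)) * Polynomial.X) :
    G * H = 0 := by
  have h2r : n < 2 * r := by omega
  ext s c
  have hs : s.val < r := s.isLt
  have hc : c.val < n - r := c.isLt
  rw [Matrix.mul_apply, Matrix.zero_apply]
  set a : Fin n → F := fun j => ω ^ (s.val * j.val) with ha
  set b : Fin n → F := fun j => if s.val < 2 * r - n then 0
          else ω ^ ((s.val + (n - r)) * j.val) with hb
  set cc : Fin n → F := fun j => ω⁻¹ ^ ((r + c.val) * j.val) with hcc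
  set d : Fin n → F := fun j => ω⁻¹ ^ ((2 * r - n + c.val) * j.val) with hd
  have step1 : ∀ j : Fin n, G s j * H j c =
      C (a j * cc j) + C (b j * cc j - a j * d j) * X - C (b j * d j) * X ^ 2 := by
    intro j
    rw [hG, hH]
    simp only [map_mul, map_sub]
    ring
  rw [Finset.sum_congr rfl (fun j _ => step1 j)]
  rw [Finset.sum_sub_distrib, Finset.sum_add_distrib, ← Finset.sum_mul, ← Finset.sum_mul,
    ← map_sum, ← map_sum, ← map_sum, Finset.sum_sub_distrib]
  have S0 : ∑ j : Fin n, a j * cc j = 0 := by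
    rw [ha, hcc]
    rw [key13 hn hω s.val (r + c.val) (by omega) (by omega)]
    rw [if_neg (by omega)]
  have S2 : ∑ j : Fin n, b j * d j = 0 := by
    rw [hb, hd]
    by_cases hcase : s.val < 2 * r - n
    · simp [hcase]
    · simp only [if_neg hcase]
      rw [key13 hn hω (s.val + (n - r)) (2 * r - n + c.val) (by omega) (by omega)]
      rw [if_neg (by omega)]
  have S1 : (∑ j : Fin n, b j * cc j) - (∑ j : Fin n, a j * d j) = 0 := by
    rw [ha, hb, hcc, hd]
    by_cases hcase : s.val < 2 * r - n
    · simp only [if_pos hcase, zero_mul, Finset.sum_const_zero]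
      rw [key13 hn hω s.val (2 * r - n + c.val) (by omega) (by omega)]
      rw [if_neg (by omega)]
      simp
    · simp only [if_neg hcase]
      rw [key13 hn hω (s.val + (n - r)) (r + c.val) (by omega) (by omega),
        key13 hn hω s.val (2 * r - n + c.val) (by omega) (by omega)]
      by_cases heq : s.val = 2 * r - n + c.val
      · rw [if_pos (by omega), if_pos heq]; ring
      · rw [if_neg (by omega), if_neg heq]; ring
  rw [S0, S1, S2]
  simp
end

section
/- Let F be a field and let A, B, C, D be matrices over F of the same size r×n such that the rows of A are linearly independent and the rows of C are linearly independent. Suppose the row space of A intersects the row space of C trivially, and the row space of B intersects the row space of D trivially. Then, for either choice of sign, the F[z]-submodule of (F[z])^n generated by the rows of A + Bz intersects trivially the F[z]-submodule generated by the rows of C ± Dz: if P[z](A+Bz) = Q[z](C ± Dz) for row vectors P[z], Q[z] ∈ (F[z])^r, then P[z](A+Bz) = 0. -/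
/-- If the row space of `A` meets the row space of `C` trivially and the row space of `B`
meets the row space of `D` trivially (rows of `A` and of `C` linearly independent), then
the `F[z]`-module generated by the rows of `A + Bz` meets that generated by the rows of
`C ± Dz` trivially. -/
theorem stmt14 (F : Type*) [Field F] (r n : ℕ)
    (A B C D : Matrix (Fin r) (Fin n) F)
    (hA : LinearIndependent F (fun i : Fin r => A i))
    (hC : LinearIndependent F (fun i : Fin r => C i))
    (hAC : Submodule.span F (Set.range fun i : Fin r => A i) ⊓
      Submodule.span F (Set.range fun i : Fin r => C i) = ⊥)
    (hBD : Submodule.span F (Set.range fun i : Fin r => B i) ⊓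
      Submodule.span F (Set.range fun i : Fin r => D i) = ⊥)
    (ε : F) (hε : ε = 1 ∨ ε = -1)
    (GA GC : Matrix (Fin r) (Fin n) (Polynomial F))
    (hGA : ∀ (i : Fin r) (j : Fin n),
      GA i j = Polynomial.C (A i j) + Polynomial.C (B i j) * Polynomial.X)
    (hGC : ∀ (i : Fin r) (j : Fin n),
      GC i j = Polynomial.C (C i j) + Polynomial.C (ε * D i j) * Polynomial.X)
    (P Q : Fin r → Polynomial F)
    (h : Matrix.vecMul P GA = Matrix.vecMul Q GC) :
    Matrix.vecMul P GA = 0 := by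
  classical
  have hvm : ∀ (u : Fin r → F) (M : Matrix (Fin r) (Fin n) F),
      Matrix.vecMul u M = ∑ i, u i • M i := by
    intro u M
    funext j
    simp [Matrix.vecMul, dotProduct, Finset.sum_apply]
  -- If u ᵥ* A = v ᵥ* C then u = 0 and v = 0
  have hzero : ∀ u v : Fin r → F, Matrix.vecMul u A = Matrix.vecMul v C →
      (∀ i, u i = 0) ∧ (∀ i, v i = 0) := by
    intro u v huv
    have hmemA : Matrix.vecMul u A ∈ Submodule.span F (Set.range fun i : Fin r => A i) := by
      rw [hvm]
      exact Submodule.sum_mem _ fun i _ =>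
        Submodule.smul_mem _ _ (Submodule.subset_span ⟨i, rfl⟩)
    have hmemC : Matrix.vecMul v C ∈ Submodule.span F (Set.range fun i : Fin r => C i) := by
      rw [hvm]
      exact Submodule.sum_mem _ fun i _ =>
        Submodule.smul_mem _ _ (Submodule.subset_span ⟨i, rfl⟩)
    have hbot : Matrix.vecMul u A ∈ (⊥ : Submodule F (Fin n → F)) := by
      rw [← hAC]; exact ⟨hmemA, huv ▸ hmemC⟩
    have hA0 : Matrix.vecMul u A = 0 := by simpa using hbot
    have hC0 : Matrix.vecMul v C = 0 := by rw [← huv]; exact hA0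
    constructor
    · have := (Fintype.linearIndependent_iff.mp hA) u
      rw [hvm] at hA0
      exact this hA0
    · have := (Fintype.linearIndependent_iff.mp hC) v
      rw [hvm] at hC0
      exact this hC0
  -- coefficient equation
  have hcoeff : ∀ (k : ℕ) (j : Fin n),
      ∑ i, ((P i).coeff k * A i j + (P i * Polynomial.X).coeff k * B i j)
        = ∑ i, ((Q i).coeff k * C i j + (Q i * Polynomial.X).coeff k * (ε * D i j)) := by
    intro k j
    have h1 := congrFun h j
    have h2 : ((Matrix.vecMul P GA) j).coeff k = ((Matrix.vecMul Q GC) j).coeff k := by rw [h1]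
    simp only [Matrix.vecMul, dotProduct, Polynomial.finset_sum_coeff] at h2
    calc ∑ i, ((P i).coeff k * A i j + (P i * Polynomial.X).coeff k * B i j)
        = ∑ i, (P i * GA i j).coeff k := by
          refine Finset.sum_congr rfl fun i _ => ?_
          rw [hGA, mul_add, Polynomial.coeff_add, ← mul_assoc,
            mul_comm (P i) (Polynomial.C (B i j)), mul_assoc,
            mul_comm (Polynomial.C (B i j)) _, Polynomial.coeff_mul_C, Polynomial.coeff_mul_C]
      _ = ∑ i, (Q i * GC i j).coeff k := h2
      _ = _ := by
          refine Finset.sum_congr rfl fun i _ => ?_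
          rw [hGC, mul_add, Polynomial.coeff_add, ← mul_assoc,
            mul_comm (Q i) (Polynomial.C (ε * D i j)), mul_assoc,
            mul_comm (Polynomial.C (ε * D i j)) _, Polynomial.coeff_mul_C, Polynomial.coeff_mul_C]
  -- induction: all coefficients vanish
  have hvanish : ∀ k : ℕ, (∀ i, (P i).coeff k = 0) ∧ (∀ i, (Q i).coeff k = 0) := by
    intro k
    induction k with
    | zero =>
      have := hzero (fun i => (P i).coeff 0) (fun i => (Q i).coeff 0) ?_
      · exact this
      · funext j
        have := hcoeff 0 j
        simp only [Polynomial.mul_coeff_zero, Polynomial.coeff_X_zero, mul_zero, zero_mul,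
          add_zero] at this
        simpa [Matrix.vecMul, dotProduct] using this
    | succ k ih =>
      have := hzero (fun i => (P i).coeff (k+1)) (fun i => (Q i).coeff (k+1)) ?_
      · exact this
      · funext j
        have hk := hcoeff (k+1) j
        simp only [Polynomial.coeff_mul_X, ih.1, ih.2, zero_mul, add_zero] at hk
        simpa [Matrix.vecMul, dotProduct] using hk
  have hP0 : P = 0 := by
    funext i
    exact Polynomial.ext fun k => (hvanish k).1 i
  rw [hP0, Matrix.zero_vecMul]
end

section
/- Let F be a field, n a positive integer whose image in F is nonzero, ω ∈ F a primitive n-th root of unity, and e_0,…,e_{n−1} the rows of the Fourier matrix F_n. Let r > ⌊n/2⌋, A the r×n matrix with rows e_0,…,e_{r−1}, and B the r×n matrix whose first 2r−n rows are zero and whose last n−r rows are e_r,…,e_{n−1}. Let M be the (n−r)×n matrix with rows e_{n−1}, e_{n−2}, …, e_r and N the (n−r)×n matrix with rows e_{n−r}, e_{n−r−1}, …, e_1 (so M + Nz generates the module-theoretic dual of the convolutional code generated by A + Bz). Then the F[z]-submodule of (F[z])^n generated by the rows of A + Bz intersects trivially the F[z]-submodule generated by the rows of M + Nz; that is, the convolutional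 code generated by G[z] = A + Bz is a linear complementary dual (LCD) convolutional code. -/
open Polynomial Finset

private lemma keyOrtho {F : Type*} [Field F] {n : ℕ} (hn : 0 < n) {ω : F}
    (hω : IsPrimitiveRoot ω n) {a b : ℕ} (ha : a < n) (hb : b < n) :
    ∑ j : Fin n, ω ^ (a * j.val) * ω ^ ((n - b) * j.val)
      = if a = b then (n : F) else 0 := by
  have hrw : ∀ j : Fin n, ω ^ (a * j.val) * ω ^ ((n - b) * j.val)
      = (ω ^ (a + (n - b))) ^ j.val := by
    intro j
    rw [← pow_add, ← add_mul, pow_mul]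
  simp only [hrw]
  rw [Fin.sum_univ_eq_sum_range]
  by_cases hab : a = b
  · subst hab
    have he : a + (n - a) = n := by omega
    rw [if_pos rfl, he, hω.pow_eq_one]
    simp
  · rw [if_neg hab]
    have hζn : (ω ^ (a + (n - b))) ^ n = 1 := by
      rw [← pow_mul, mul_comm, pow_mul, hω.pow_eq_one, one_pow]
    have hζ1 : ω ^ (a + (n - b)) ≠ 1 := by
      intro h1
      obtain ⟨c, hc⟩ := (hω.pow_eq_one_iff_dvd _).mp h1
      have hc1 : c = 1 := by
        rcases Nat.lt_or_ge c 2 with hlt | hge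
        · interval_cases c <;> omega
        · exfalso
          have : n * 2 ≤ n * c := Nat.mul_le_mul_left n hge
          omega
      rw [hc1, mul_one] at hc
      exact hab (by omega)
    rw [geom_sum_eq hζ1, hζn]
    simp

private lemma sum_pick {M : Type*} [Ring M] {r : ℕ} (f : Fin r → M) (v : M) (k : ℕ) :
    ∑ s : Fin r, f s * (if s.val = k then v else 0)
      = (if h : k < r then f ⟨k, h⟩ else 0) * v := by
  by_cases h : k < r
  · rw [dif_pos h, Finset.sum_eq_single (⟨k, h⟩ : Fin r)]
    · simp
    · intro b _ hb
      rw [if_neg, mul_zero]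
      intro hbk; exact hb (Fin.ext hbk)
    · intro h'; exact absurd (Finset.mem_univ _) h'
  · rw [dif_neg h, zero_mul]
    apply Finset.sum_eq_zero
    intro s _
    rw [if_neg, mul_zero]
    omega

/-- The convolutional code generated by `G[z] = A + Bz` (`A` the first `r` Fourier rows,
`B` zero rows followed by `e_r, …, e_{n-1}`) meets trivially the code generated by
`M + Nz`, where `M` has rows `e_{n-1}, …, e_r` and `N` has rows `e_{n-r}, …, e_1`
(the generator of the module-theoretic dual); i.e. the code is an LCD convolutional
code. -/
theorem stmt15 (F : Type*) [Field F] (n r : ℕ) (hn : 0 < n)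
    (hchar : (n : F) ≠ 0) (ω : F) (hω : IsPrimitiveRoot ω n)
    (hr : n / 2 < r) (hrn : r ≤ n)
    (GA : Matrix (Fin r) (Fin n) (Polynomial F))
    (hGA : ∀ (s : Fin r) (j : Fin n), GA s j =
      Polynomial.C (ω ^ (s.val * j.val)) +
        Polynomial.C (if s.val < 2 * r - n then 0
          else ω ^ ((s.val + (n - r)) * j.val)) * Polynomial.X)
    (GM : Matrix (Fin (n - r)) (Fin n) (Polynomial F))
    (hGM : ∀ (c : Fin (n - r)) (j : Fin n), GM c j =
      Polynomial.C (ω ^ ((n - 1 - c.val) * j.val)) +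
        Polynomial.C (ω ^ ((n - r - c.val) * j.val)) * Polynomial.X) :
    ∀ (P : Fin r → Polynomial F) (Q : Fin (n - r) → Polynomial F),
      Matrix.vecMul P GA = Matrix.vecMul Q GM → Matrix.vecMul P GA = 0 := by
  intro P Q h
  have hm_lt : n - r < r := by omega
  have hr1 : 1 ≤ r := by omega
  set P' : ℕ → Polynomial F := fun i => if h : i < r then P ⟨i, h⟩ else 0 with hP'
  set Q' : ℕ → Polynomial F := fun i => if h : i < n - r then Q ⟨i, h⟩ else 0 with hQ'
  -- the key coefficient equations
  have E : ∀ k, k < n →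
      P' k + X * (if r ≤ k then P' (k - (n - r)) else 0)
        = Q' (n - 1 - k) + X * (if 1 ≤ k ∧ k ≤ n - r then Q' (n - r - k) else 0) := by
    intro k hk
    have hsum : ∑ j : Fin n, (Matrix.vecMul P GA j) * C (ω ^ ((n - k) * j.val))
        = ∑ j : Fin n, (Matrix.vecMul Q GM j) * C (ω ^ ((n - k) * j.val)) := by
      rw [h]
    have hVA : ∀ j : Fin n, Matrix.vecMul P GA j = ∑ s : Fin r, P s * GA s j := by
      intro j; simp [Matrix.vecMul, dotProduct]
    have hVM : ∀ j : Fin n, Matrix.vecMul Q GM j = ∑ c : Fin (n - r), Q c * GM c j := by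
      intro j; simp [Matrix.vecMul, dotProduct]
    simp only [hVA, hVM] at hsum
    -- LHS
    have hL : ∑ j : Fin n, (∑ s : Fin r, P s * GA s j) * C (ω ^ ((n - k) * j.val))
        = (n : Polynomial F) * (P' k + X * (if r ≤ k then P' (k - (n - r)) else 0)) := by
      have step1 : ∑ j : Fin n, (∑ s : Fin r, P s * GA s j) * C (ω ^ ((n - k) * j.val))
          = ∑ s : Fin r, ∑ j : Fin n, P s * GA s j * C (ω ^ ((n - k) * j.val)) := by
        simp_rw [Finset.sum_mul]
        exact Finset.sum_comm
      rw [step1]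
      have step2 : ∀ s : Fin r, ∑ j : Fin n, P s * GA s j * C (ω ^ ((n - k) * j.val))
          = P s * C (∑ j : Fin n, ω ^ (s.val * j.val) * ω ^ ((n - k) * j.val))
            + P s * X * C (∑ j : Fin n,
                (if s.val < 2 * r - n then 0 else ω ^ ((s.val + (n - r)) * j.val))
                  * ω ^ ((n - k) * j.val)) := by
        intro s
        rw [map_sum, map_sum, Finset.mul_sum, Finset.mul_sum, ← Finset.sum_add_distrib]
        refine Finset.sum_congr rfl fun j _ => ?_
        rw [hGA, map_mul, map_mul]
        ring
      simp only [step2]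
      have hin1 : ∀ s : Fin r,
          (∑ j : Fin n, ω ^ (s.val * j.val) * ω ^ ((n - k) * j.val))
            = if s.val = k then (n : F) else 0 := fun s =>
        keyOrtho hn hω (lt_of_lt_of_le s.isLt hrn) hk
      have hin2 : ∀ s : Fin r,
          (∑ j : Fin n, (if s.val < 2 * r - n then (0:F)
              else ω ^ ((s.val + (n - r)) * j.val)) * ω ^ ((n - k) * j.val))
            = if r ≤ k ∧ s.val = k - (n - r) then (n : F) else 0 := by
        intro s
        have hs := s.isLt
        by_cases hcase : s.val < 2 * r - n
        · simp only [if_pos hcase, zero_mul, Finset.sum_const_zero]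
          rw [if_neg]
          rintro ⟨h1, h2⟩
          omega
        · simp only [if_neg hcase]
          rw [keyOrtho hn hω (by omega) hk]
          split_ifs with h1 h2 h2 <;> first | rfl | (exfalso; omega)
      simp only [hin1, hin2]
      simp only [apply_ite C, map_natCast, map_zero]
      rw [Finset.sum_add_distrib]
      rw [sum_pick (fun s => P s) ((n:ℕ) : Polynomial F) k]
      by_cases hrk : r ≤ k
      · simp only [if_pos hrk, ite_and, if_pos hrk]
        rw [sum_pick (fun s => P s * X) ((n:ℕ) : Polynomial F) (k - (n - r))]
        have hklt : k - (n - r) < r := by omega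
        rw [dif_pos hklt]
        show P' k * (n : Polynomial F) + P ⟨k - (n-r), hklt⟩ * X * (n : Polynomial F)
            = (n : Polynomial F) * (P' k + X * P' (k - (n - r)))
        have : P' (k - (n - r)) = P ⟨k - (n-r), hklt⟩ := by
          simp only [hP']; rw [dif_pos hklt]
        rw [this]; ring
      · simp only [if_neg hrk, ite_and, if_neg hrk]
        simp only [Finset.sum_const_zero, mul_zero, add_zero]
        show P' k * (n : Polynomial F) = (n : Polynomial F) * P' k
        ring
    -- RHS
    have hRj : ∑ j : Fin n, (∑ c : Fin (n - r), Q c * GM c j) * C (ω ^ ((n - k) * j.val))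
        = (n : Polynomial F) * (Q' (n - 1 - k)
            + X * (if 1 ≤ k ∧ k ≤ n - r then Q' (n - r - k) else 0)) := by
      have step1 : ∑ j : Fin n, (∑ c : Fin (n - r), Q c * GM c j) * C (ω ^ ((n - k) * j.val))
          = ∑ c : Fin (n - r), ∑ j : Fin n, Q c * GM c j * C (ω ^ ((n - k) * j.val)) := by
        simp_rw [Finset.sum_mul]
        exact Finset.sum_comm
      rw [step1]
      have step2 : ∀ c : Fin (n - r), ∑ j : Fin n, Q c * GM c j * C (ω ^ ((n - k) * j.val))
          = Q c * C (∑ j : Fin n, ω ^ ((n - 1 - c.val) * j.val) * ω ^ ((n - k) * j.val))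
            + Q c * X * C (∑ j : Fin n,
                ω ^ ((n - r - c.val) * j.val) * ω ^ ((n - k) * j.val)) := by
        intro c
        rw [map_sum, map_sum, Finset.mul_sum, Finset.mul_sum, ← Finset.sum_add_distrib]
        refine Finset.sum_congr rfl fun j _ => ?_
        rw [hGM, map_mul, map_mul]
        ring
      simp only [step2]
      have hin1 : ∀ c : Fin (n - r),
          (∑ j : Fin n, ω ^ ((n - 1 - c.val) * j.val) * ω ^ ((n - k) * j.val))
            = if c.val = n - 1 - k then (n : F) else 0 := by
        intro c
        have hc := c.isLt
        rw [keyOrtho hn hω (by omega) hk]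
        split_ifs with h1 h2 h2 <;> first | rfl | (exfalso; omega)
      have hin2 : ∀ c : Fin (n - r),
          (∑ j : Fin n, ω ^ ((n - r - c.val) * j.val) * ω ^ ((n - k) * j.val))
            = if (1 ≤ k ∧ k ≤ n - r) ∧ c.val = n - r - k then (n : F) else 0 := by
        intro c
        have hc := c.isLt
        rw [keyOrtho hn hω (by omega) hk]
        split_ifs with h1 h2 h2 <;> first | rfl | (exfalso; omega)
      simp only [hin1, hin2]
      simp only [apply_ite C, map_natCast, map_zero]
      rw [Finset.sum_add_distrib]
      rw [sum_pick (fun c => Q c) ((n:ℕ) : Polynomial F) (n - 1 - k)]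
      have hfold1 : (if h : n - 1 - k < n - r then Q ⟨n - 1 - k, h⟩ else 0)
          = Q' (n - 1 - k) := by simp only [hQ']
      rw [hfold1]
      by_cases hck : 1 ≤ k ∧ k ≤ n - r
      · simp only [if_pos hck, ite_and]
        rw [sum_pick (fun c => Q c * X) ((n:ℕ) : Polynomial F) (n - r - k)]
        have hfold2 : (if h : n - r - k < n - r then Q ⟨n - r - k, h⟩ * X else 0)
            = Q' (n - r - k) * X := by
          simp only [hQ']
          split_ifs with hh
          · rfl
          · rw [zero_mul]
        rw [hfold2]
        ring
      · rw [if_neg hck]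
        have : ∀ c : Fin (n - r),
            Q c * X * (if (1 ≤ k ∧ k ≤ n - r) ∧ c.val = n - r - k then ((n:ℕ) : Polynomial F) else 0) = 0 := by
          intro c
          rw [if_neg, mul_zero]
          rintro ⟨h1, _⟩
          exact hck h1
        simp only [this, Finset.sum_const_zero, mul_zero, add_zero]
        ring
    rw [hL, hRj] at hsum
    have hCn : ((n : ℕ) : Polynomial F) ≠ 0 := by
      rw [← map_natCast (C : F →+* Polynomial F) n]
      exact Polynomial.C_ne_zero.mpr hchar
    exact mul_left_cancel₀ hCn hsum
  -- derived scalar equations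
  have hQ'zero : ∀ i, n - r ≤ i → Q' i = 0 := by
    intro i hi
    simp only [hQ']
    rw [dif_neg (by omega)]
  have hP'zero : ∀ i, r ≤ i → P' i = 0 := by
    intro i hi
    simp only [hP']
    rw [dif_neg (by omega)]
  have eq1 : P' 0 = 0 := by
    have e := E 0 hn
    rw [if_neg (by omega : ¬ r ≤ 0), if_neg (by omega : ¬ (1 ≤ 0 ∧ 0 ≤ n - r)),
      hQ'zero (n - 1 - 0) (by omega)] at e
    simpa using e
  have eq3 : ∀ k, n - r < k → k < r → P' k = 0 := by
    intro k h1 h2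
    have e := E k (by omega)
    rw [if_neg (by omega : ¬ r ≤ k), if_neg (by omega : ¬ (1 ≤ k ∧ k ≤ n - r)),
      hQ'zero (n - 1 - k) (by omega)] at e
    simpa using e
  have eq2 : ∀ k, 1 ≤ k → k ≤ n - r → P' k = X * Q' (n - r - k) := by
    intro k h1 h2
    have e := E k (by omega)
    rw [if_neg (by omega : ¬ r ≤ k), if_pos ⟨h1, h2⟩,
      hQ'zero (n - 1 - k) (by omega)] at e
    simpa using e
  have eq4 : ∀ c, c < n - r → Q' c = X * P' (r - 1 - c) := by
    intro c hc
    have e := E (n - 1 - c) (by omega)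
    rw [if_pos (by omega : r ≤ n - 1 - c), if_neg (by omega : ¬ (1 ≤ n - 1 - c ∧ n - 1 - c ≤ n - r)),
      hP'zero (n - 1 - c) (by omega),
      (by omega : n - 1 - c - (n - r) = r - 1 - c),
      (by omega : n - 1 - (n - 1 - c) = c)] at e
    simpa using e.symm
  have comb : ∀ k, 1 ≤ k → k ≤ n - r → P' k = X * (X * P' (k + (r - 1 - (n - r)))) := by
    intro k h1 h2
    rw [eq2 k h1 h2, eq4 (n - r - k) (by omega),
      (by omega : r - 1 - (n - r - k) = k + (r - 1 - (n - r)))]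
  have main : ∀ t, ∀ k, 1 ≤ k → k ≤ n - r → n - r - k < t → P' k = 0 := by
    intro t
    induction t with
    | zero => intro k _ _ hlt; omega
    | succ t ih =>
      intro k h1 h2 hlt
      by_cases hd : r - 1 - (n - r) = 0
      · have hk := comb k h1 h2
        rw [hd, add_zero, ← mul_assoc] at hk
        by_contra hp
        have h2d : (X * X : Polynomial F) ≠ 0 := mul_ne_zero X_ne_zero X_ne_zero
        have hdeg := congrArg natDegree hk
        rw [natDegree_mul h2d hp] at hdeg
        have hxx : natDegree (X * X : Polynomial F) = 2 := by
          rw [← sq, natDegree_X_pow]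
        omega
      · have hk := comb k h1 h2
        have hz : P' (k + (r - 1 - (n - r))) = 0 := by
          by_cases hkd : k + (r - 1 - (n - r)) ≤ n - r
          · exact ih (k + (r - 1 - (n - r))) (by omega) hkd (by omega)
          · exact eq3 (k + (r - 1 - (n - r))) (by omega) (by omega)
        rw [hz, mul_zero, mul_zero] at hk
        exact hk
  have hP0 : P = 0 := by
    funext s
    have hv := s.isLt
    have hfold : P s = P' s.val := by
      simp only [hP']
      rw [dif_pos hv]
    rcases Nat.eq_zero_or_pos s.val with h0 | h1
    · rw [hfold, h0]
      simpa using eq1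
    · by_cases hsm : s.val ≤ n - r
      · rw [hfold]
        simpa using main (n - r + 1) s.val h1 hsm (by omega)
      · rw [hfold]
        simpa using eq3 s.val (by omega) hv
  rw [hP0, Matrix.zero_vecMul]
end
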